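/- A joint quantum state is the pair of its projection and extracted channel: Let τ be a quantum state on ℂ^n ⊗ ℂ^m (a positive semidefinite trace-1 matrix indexed by Fin n × Fin m) such that proj(τ) is positive definite. Then for all i, j ∈ Fin n and k, ℓ ∈ Fin m: conj((√(proj τ) * extr(τ) k ℓ * √(proj τ)) i j) = τ (i,k) (j,ℓ), i.e. pair(proj(τ), extr(τ)) = τ. -/

import Mathlib

open Matrix
open scoped ComplexOrder

noncomputable section

/-- The positive semidefinite square root of a positive semidefinite matrix
(the definition `Matrix.PosSemidef.sqrt` of the older Mathlib, since removed). -/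
def Matrix.PosSemidef.sqrt {n : Type*} [Fintype n] [DecidableEq n] {𝕜 : Type*} [RCLike 𝕜]
    {A : Matrix n n 𝕜} (hA : A.PosSemidef) : Matrix n n 𝕜 :=
  hA.1.eigenvectorUnitary.1 * diagonal ((↑) ∘ Real.sqrt ∘ hA.1.eigenvalues) *
    (star hA.1.eigenvectorUnitary : Matrix n n 𝕜)

/-- Transpose of the first marginal of a joint quantum state. -/
def qproj {n m : ℕ} (τ : Matrix (Fin n × Fin m) (Fin n × Fin m) ℂ) :
    Matrix (Fin n) (Fin n) ℂ :=
  Matrix.of fun i j => ∑ k, τ (j, k) (i, k)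

/-- Channel extracted from a joint quantum state. -/
def qextr {n m : ℕ} (τ : Matrix (Fin n × Fin m) (Fin n × Fin m) ℂ)
    (h : (qproj τ).PosDef) : Fin m → Fin m → Matrix (Fin n) (Fin n) ℂ :=
  fun k ℓ => ∑ i, ∑ j, (starRingEnd ℂ) (τ (i, k) (j, ℓ))
    • ((h.posSemidef.sqrt)⁻¹ * Matrix.single i j 1 * (h.posSemidef.sqrt)⁻¹)

/-- A joint quantum state is the pair of its projection and extracted channel:
`pair(proj(τ), extr(τ)) = τ`. -/
theorem pair_proj_extr {n m : ℕ}
    (τ : Matrix (Fin n × Fin m) (Fin n × Fin m) ℂ)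
    (hτ : τ.PosSemidef) (hτtr : τ.trace = 1)
    (hproj : (qproj τ).PosDef) :
    ∀ i (j : Fin n) k (ℓ : Fin m),
      (starRingEnd ℂ)
          ((hproj.posSemidef.sqrt * qextr τ hproj k ℓ * hproj.posSemidef.sqrt) i j)
        = τ (i, k) (j, ℓ) := by
  intro i j k ℓ
  set S := hproj.posSemidef.sqrt with hSdef
  have hSS : S * S = qproj τ := by
    have hspec := hproj.posSemidef.1.spectral_theorem
    have hU : (star hproj.posSemidef.1.eigenvectorUnitary : Matrix (Fin n) (Fin n) ℂ) *
        hproj.posSemidef.1.eigenvectorUnitary.1 = 1 := Unitary.coe_star_mul_self _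
    have hD : diagonal ((↑) ∘ Real.sqrt ∘ hproj.posSemidef.1.eigenvalues) *
        diagonal ((↑) ∘ Real.sqrt ∘ hproj.posSemidef.1.eigenvalues)
        = diagonal (RCLike.ofReal ∘ hproj.posSemidef.1.eigenvalues : Fin n → ℂ) := by
      rw [diagonal_mul_diagonal]
      congr 1
      funext x
      simp only [Function.comp_apply]
      rw [← Complex.ofReal_mul, Real.mul_self_sqrt (hproj.posSemidef.eigenvalues_nonneg x)]
      rfl
    rw [hSdef, Matrix.PosSemidef.sqrt]
    calc _ = hproj.posSemidef.1.eigenvectorUnitary.1 *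
          (diagonal ((↑) ∘ Real.sqrt ∘ hproj.posSemidef.1.eigenvalues) *
          ((star hproj.posSemidef.1.eigenvectorUnitary : Matrix (Fin n) (Fin n) ℂ) *
          hproj.posSemidef.1.eigenvectorUnitary.1) *
          diagonal ((↑) ∘ Real.sqrt ∘ hproj.posSemidef.1.eigenvalues)) *
          (star hproj.posSemidef.1.eigenvectorUnitary : Matrix (Fin n) (Fin n) ℂ) := by
          simp only [mul_assoc]; rfl
      _ = _ := by rw [hU, mul_one, hD]; exact hspec.symm
  have hunit : IsUnit S.det := by
    have h2 : S.det * S.det = (qproj τ).det := by rw [← det_mul, hSS]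
    have := hproj.det_pos.ne'
    exact isUnit_of_mul_isUnit_left (h2 ▸ this.isUnit)
  have h1 : S * S⁻¹ = 1 := Matrix.mul_nonsing_inv S hunit
  have h2 : S⁻¹ * S = 1 := Matrix.nonsing_inv_mul S hunit
  have key : S * qextr τ hproj k ℓ * S
      = ∑ a, ∑ b, (starRingEnd ℂ) (τ (a, k) (b, ℓ)) • Matrix.single a b 1 := by
    simp only [qextr, Matrix.mul_sum, Matrix.sum_mul, Matrix.mul_smul, Matrix.smul_mul]
    refine Finset.sum_congr rfl fun a _ => Finset.sum_congr rfl fun b _ => ?_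
    refine congrArg (_ • ·) ?_
    calc S * (S⁻¹ * single a b 1 * S⁻¹) * S
        = (S * S⁻¹) * single a b 1 * (S⁻¹ * S) := by simp only [mul_assoc]
      _ = single a b 1 := by rw [h1, h2, one_mul, mul_one]
  rw [key]
  simp [Matrix.sum_apply, Matrix.single, Matrix.smul_apply, apply_ite (starRingEnd ℂ), ite_and,
    Finset.sum_ite_eq, Finset.sum_ite_eq']

end
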